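/- Let Ω ⊆ ℝ^d bounded open and m a nonnegative set function on open cubes with m(∅)=0. Assume ω := limsup_{δ→0} sup_{Q⊆Ω, diam(Q)<δ} m(Q)/|Q| < ∞, and assume for a.e. x ∈ Ω: limsup_{δ→0} m(Q_δ(x))/δ^d ≤ limsup_{δ→0} m^♯(Q_δ(x))/δ^d, where Q_δ(x) := x + δ(0,1)^d. Then for a.e. x ∈ Ω, the limit lim_{δ→0} m(Q_δ(x))/δ^d exists, i.e., limsup_{δ→0} m(Q_δ(x))/δ^d = liminf_{δ→0} m(Q_δ(x))/δ^d. -/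

import Mathlib

open Filter Set Topology MeasureTheory

/-- `Q` is an open axis-parallel cube of `ℝ^d` (with positive side length). -/
def IsOpenCube {d : ℕ} (Q : Set (Fin d → ℝ)) : Prop :=
  ∃ (c : Fin d → ℝ) (r : ℝ), 0 < r ∧ Q = {y | ∀ i, y i ∈ Set.Ioo (c i) (c i + r)}

/-- `𝒬 ∈ F_δ(E)`: a countable family of open cubes of diameter `< δ` with pairwise
disjoint closures, each meeting `E`, covering `E` up to Lebesgue measure zero. -/
def CubeFam {d : ℕ} (E : Set (Fin d → ℝ)) (δ : ℝ)
    (𝒬 : Set (Set (Fin d → ℝ))) : Prop :=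
  𝒬.Countable ∧
  (∀ Q ∈ 𝒬, IsOpenCube Q ∧ Metric.diam Q < δ ∧ (Q ∩ E).Nonempty) ∧
  𝒬.Pairwise (fun Q Q' => Disjoint (closure Q) (closure Q')) ∧
  volume (E \ ⋃₀ 𝒬) = 0

/-- The Carathéodory-type construction
`m^♯(E) := sup_{δ>0} inf { Σ_i m(Q_i) : {Q_i} ∈ F_δ(E) }` (and `m^♯(∅) = 0`, which holds
automatically since the empty family belongs to `F_δ(∅)`). -/
noncomputable def msharp {d : ℕ} (m : Set (Fin d → ℝ) → ENNReal)
    (E : Set (Fin d → ℝ)) : ENNReal :=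
  ⨆ (δ : ℝ) (_ : 0 < δ), ⨅ (𝒬 : Set (Set (Fin d → ℝ))) (_ : CubeFam E δ 𝒬),
    ∑' Q : 𝒬, m Q

/-- `ω := limsup_{δ→0⁺} sup { m(Q)/|Q| : Q ⊆ Ω an open cube with diam(Q) < δ }`. -/
noncomputable def cubeOmega {d : ℕ} (m : Set (Fin d → ℝ) → ENNReal)
    (Ω : Set (Fin d → ℝ)) : ENNReal :=
  Filter.limsup
    (fun δ : ℝ => ⨆ Q ∈ {Q | IsOpenCube Q ∧ Q ⊆ Ω ∧ Metric.diam Q < δ}, m Q / volume Q)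
    (nhdsWithin 0 (Set.Ioi 0))

/-- The open cube `Q_δ(x) = x + δ(0,1)^d`. -/
def openCube {d : ℕ} (x : Fin d → ℝ) (δ : ℝ) : Set (Fin d → ℝ) :=
  {y | ∀ i, y i ∈ Set.Ioo (x i) (x i + δ)}

open scoped NNReal ENNReal
set_option maxHeartbeats 1000000

namespace CubeAux

variable {d : ℕ}

lemma openCube_eq_pi (x : Fin d → ℝ) (r : ℝ) :
    openCube x r = Set.pi univ (fun i => Ioo (x i) (x i + r)) := by
  ext y; simp [openCube, Set.mem_pi]

lemma isOpen_openCube (x : Fin d → ℝ) (r : ℝ) : IsOpen (openCube x r) := by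
  rw [openCube_eq_pi]; exact isOpen_set_pi finite_univ (fun i _ => isOpen_Ioo)

lemma volume_openCube (x : Fin d → ℝ) {r : ℝ} (hr : 0 ≤ r) :
    volume (openCube x r) = ENNReal.ofReal (r ^ d) := by
  rw [openCube_eq_pi, Real.volume_pi_Ioo]
  simp only [add_sub_cancel_left, Finset.prod_const, Finset.card_univ, Fintype.card_fin]
  exact (ENNReal.ofReal_pow hr d).symm

lemma closure_openCube (x : Fin d → ℝ) {r : ℝ} (hr : 0 < r) :
    closure (openCube x r) = Set.pi univ (fun i => Icc (x i) (x i + r)) := by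
  rw [openCube_eq_pi, closure_pi_set]
  exact Set.pi_congr rfl fun i _ => closure_Ioo (by linarith)

lemma nonempty_openCube (x : Fin d → ℝ) {r : ℝ} (hr : 0 < r) :
    (openCube x r).Nonempty :=
  ⟨fun i => x i + r / 2, fun i => by constructor <;> simp <;> linarith⟩

lemma openCube_subset_closedBall {x z : Fin d → ℝ} {r : ℝ} (hr : 0 < r)
    (hz : z ∈ closure (openCube x r)) :
    closure (openCube x r) ⊆ Metric.closedBall z r := by
  rw [closure_openCube x hr] at *
  intro y hy
  rw [Metric.mem_closedBall, dist_pi_le_iff hr.le]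
  intro i
  have h1 := hy i (mem_univ i); have h2 := hz i (mem_univ i)
  rw [Real.dist_eq, abs_le]
  simp only [mem_Icc] at h1 h2
  constructor <;> linarith

lemma diam_openCube_le {x : Fin d → ℝ} {r : ℝ} (hr : 0 < r) :
    Metric.diam (openCube x r) ≤ r := by
  refine Metric.diam_le_of_forall_dist_le hr.le fun y hy z hz => ?_
  rw [dist_pi_le_iff hr.le]
  intro i
  have h1 := hy i; have h2 := hz i
  simp only [openCube, mem_setOf_eq, mem_Ioo] at h1 h2
  rw [Real.dist_eq, abs_le]
  constructor <;> linarith [h1.1, h1.2, h2.1, h2.2]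

lemma isOpenCube_openCube (x : Fin d → ℝ) {r : ℝ} (hr : 0 < r) :
    IsOpenCube (openCube x r) := ⟨x, r, hr, rfl⟩

end CubeAux

namespace CubeAux
variable {d : ℕ}

lemma volume_closure_openCube (x : Fin d → ℝ) {r : ℝ} (hr : 0 < r) :
    volume (closure (openCube x r)) = ENNReal.ofReal (r ^ d) := by
  rw [closure_openCube x hr, Set.pi_univ_Icc, Real.volume_Icc_pi]
  simp only [add_sub_cancel_left, Finset.prod_const, Finset.card_univ, Fintype.card_fin]
  exact (ENNReal.ofReal_pow hr.le d).symm

lemma vitali_cubes (s : Set (Fin d → ℝ)) (P : (Fin d → ℝ) → ℝ → Prop)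
    (fine : ∀ z ∈ s, ∀ ε > 0, ∃ y r, 0 < r ∧ r ≤ ε ∧ P y r ∧ z ∈ closure (openCube y r)) :
    ∃ u : Set ((Fin d → ℝ) × ℝ), u.Countable ∧ (∀ p ∈ u, 0 < p.2 ∧ P p.1 p.2) ∧
      (u.PairwiseDisjoint fun p => closure (openCube p.1 p.2)) ∧
      volume (s \ ⋃ p ∈ u, closure (openCube p.1 p.2)) = 0 := by
  set B : (Fin d → ℝ) × (Fin d → ℝ) × ℝ → Set (Fin d → ℝ) :=
    fun a => closure (openCube a.2.1 a.2.2) with hBdef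
  set t : Set ((Fin d → ℝ) × (Fin d → ℝ) × ℝ) :=
    {a | 0 < a.2.2 ∧ P a.2.1 a.2.2 ∧ a.1 ∈ closure (openCube a.2.1 a.2.2)}
  obtain ⟨u, hut, hucnt, hudisj, hucov⟩ :=
    Vitali.exists_disjoint_covering_ae (volume : Measure (Fin d → ℝ)) s t
      ((6 : ℝ≥0) ^ d) (fun a => a.2.2) (fun a => a.1) B
      (fun a ha => openCube_subset_closedBall ha.1 ha.2.2)
      (fun a ha => by
        have h3 : (0:ℝ) < 3 * a.2.2 := by linarith [ha.1]
        rw [hBdef]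
        rw [volume_closure_openCube _ ha.1, Real.volume_pi_closedBall _ h3.le]
        have : ((2 : ℝ) * (3 * a.2.2)) ^ d = 6 ^ d * a.2.2 ^ d := by ring
        rw [Fintype.card_fin, this, ENNReal.ofReal_mul (by positivity), ENNReal.coe_pow,
          ENNReal.ofReal_pow (by norm_num)]
        gcongr
        norm_num)
      (fun a ha => ((nonempty_openCube a.2.1 ha.1).mono
        ((isOpen_openCube a.2.1 a.2.2).subset_interior_iff.2 subset_closure)))
      (fun a _ => isClosed_closure)
      (fun z hz ε hε => by
        obtain ⟨y, r, hr, hrε, hP, hzc⟩ := fine z hz ε hε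
        exact ⟨(z, y, r), ⟨hr, hP, hzc⟩, hrε, rfl⟩)
  refine ⟨(fun a : (Fin d → ℝ) × (Fin d → ℝ) × ℝ => a.2) '' u, hucnt.image _, ?_, ?_, ?_⟩
  · rintro p ⟨a, hau, rfl⟩
    exact ⟨(hut hau).1, (hut hau).2.1⟩
  · rintro p ⟨a, hau, rfl⟩ q ⟨b, hbu, rfl⟩ hpq
    exact hudisj hau hbu (fun h => hpq (by rw [h]))
  · rw [Set.biUnion_image]
    exact hucov

end CubeAux

namespace CubeAux
variable {d : ℕ}

lemma corner_mem_closure (x : Fin d → ℝ) {r : ℝ} (hr : 0 < r) :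
    x ∈ closure (openCube x r) := by
  rw [closure_openCube x hr]
  intro i _
  exact ⟨le_refl _, by linarith⟩

lemma volume_closure_diff_openCube (x : Fin d → ℝ) {r : ℝ} (hr : 0 < r) :
    volume (closure (openCube x r) \ openCube x r) = 0 := by
  rw [measure_diff subset_closure (isOpen_openCube x r).measurableSet.nullMeasurableSet
    (by rw [volume_openCube x hr.le]; exact ENNReal.ofReal_ne_top),
    volume_closure_openCube x hr, volume_openCube x hr.le, tsub_self]

/-- witness cubes -/
def Witness (m : Set (Fin d → ℝ) → ℝ≥0∞) (Ω : Set (Fin d → ℝ)) (t : ℝ≥0∞)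
    (y : Fin d → ℝ) (r : ℝ) : Prop :=
  0 < r ∧ openCube y r ⊆ Ω ∧ m (openCube y r) ≤ t * volume (openCube y r)

def Gset (m : Set (Fin d → ℝ) → ℝ≥0∞) (Ω : Set (Fin d → ℝ)) (t : ℝ≥0∞) (σ : ℝ) :
    Set (Fin d → ℝ) :=
  ⋃ (y : Fin d → ℝ) (r : ℝ) (_ : Witness m Ω t y r ∧ r < σ), openCube y r

lemma isOpen_Gset (m : Set (Fin d → ℝ) → ℝ≥0∞) (Ω : Set (Fin d → ℝ)) (t : ℝ≥0∞) (σ : ℝ) :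
    IsOpen (Gset m Ω t σ) :=
  isOpen_iUnion fun y => isOpen_iUnion fun r => isOpen_iUnion fun _ => isOpen_openCube y r

def Astar (m : Set (Fin d → ℝ) → ℝ≥0∞) (Ω : Set (Fin d → ℝ)) (t : ℝ≥0∞) :
    Set (Fin d → ℝ) :=
  ⋂ n : ℕ, Gset m Ω t (1 / (n + 1))

lemma measurableSet_Astar (m : Set (Fin d → ℝ) → ℝ≥0∞) (Ω : Set (Fin d → ℝ)) (t : ℝ≥0∞) :
    MeasurableSet (Astar m Ω t) :=
  MeasurableSet.iInter fun n => (isOpen_Gset m Ω t _).measurableSet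

/-- points with liminf density < t have arbitrarily small witness cubes cornered there -/
lemma exists_small_witness {m : Set (Fin d → ℝ) → ℝ≥0∞} {Ω : Set (Fin d → ℝ)}
    (hΩ : IsOpen Ω) {t : ℝ≥0∞} {x : Fin d → ℝ} (hx : x ∈ Ω)
    (hL : Filter.liminf (fun δ : ℝ => m (openCube x δ) / ENNReal.ofReal (δ ^ d))
        (nhdsWithin 0 (Set.Ioi 0)) < t) :
    ∀ ε > (0:ℝ), ∃ r, 0 < r ∧ r < ε ∧ Witness m Ω t x r := by
  intro ε hε
  obtain ⟨ρ, hρ, hball⟩ := Metric.isOpen_iff.1 hΩ x hx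
  have hfreq := frequently_lt_of_liminf_lt (by isBoundedDefault) hL
  have hmem : Set.Ioo (0:ℝ) (min ε ρ) ∈ nhdsWithin (0:ℝ) (Set.Ioi 0) :=
    Ioo_mem_nhdsGT_of_mem ⟨le_refl _, lt_min hε hρ⟩
  obtain ⟨r, hrmem, hrlt⟩ := (hfreq.and_eventually (eventually_of_mem hmem (fun y hy => hy))).exists
  refine ⟨r, hrlt.1, lt_of_lt_of_le hrlt.2 (min_le_left _ _), hrlt.1, ?_, ?_⟩
  · refine subset_trans (subset_trans subset_closure
      (openCube_subset_closedBall hrlt.1 (corner_mem_closure x hrlt.1))) ?_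
    exact subset_trans (Metric.closedBall_subset_ball (lt_of_lt_of_le hrlt.2 (min_le_right _ _)))
      hball
  · rw [volume_openCube x hrlt.1.le]
    have hv0 : ENNReal.ofReal (r ^ d) ≠ 0 := by
      simp [ENNReal.ofReal_eq_zero, not_le, pow_pos hrlt.1]
    exact le_of_lt ((ENNReal.div_lt_iff (Or.inl hv0) (Or.inl ENNReal.ofReal_ne_top)).1 hrmem)

/-- a.e. point with liminf < t belongs to `Astar` -/
lemma ae_mem_Astar {m : Set (Fin d → ℝ) → ℝ≥0∞} {Ω : Set (Fin d → ℝ)}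
    (hΩ : IsOpen Ω) (t : ℝ≥0∞) :
    volume ({x ∈ Ω | Filter.liminf (fun δ : ℝ => m (openCube x δ) / ENNReal.ofReal (δ ^ d))
        (nhdsWithin 0 (Set.Ioi 0)) < t} \ Astar m Ω t) = 0 := by
  set S := {x ∈ Ω | Filter.liminf (fun δ : ℝ => m (openCube x δ) / ENNReal.ofReal (δ ^ d))
        (nhdsWithin 0 (Set.Ioi 0)) < t}
  have : S \ Astar m Ω t ⊆ ⋃ n : ℕ, S \ Gset m Ω t (1 / (n + 1)) := by
    intro z hz
    rw [Set.mem_iUnion]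
    simp only [Astar, Set.mem_diff, Set.mem_iInter, not_forall] at hz
    obtain ⟨n, hn⟩ := hz.2
    exact ⟨n, hz.1, hn⟩
  refine measure_mono_null this (measure_iUnion_null fun n => ?_)
  have hσ : (0:ℝ) < 1 / (n + 1) := by positivity
  obtain ⟨u, hucnt, huprop, hudisj, hucov⟩ :=
    vitali_cubes (S \ Gset m Ω t (1 / (n + 1)))
      (fun y r => Witness m Ω t y r ∧ r < 1 / (n + 1))
      (by
        intro z hz ε hε
        obtain ⟨r, hr0, hrε, hw⟩ := exists_small_witness hΩ hz.1.1 hz.1.2 (min ε (1/(n+1)))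
          (lt_min hε hσ)
        exact ⟨z, r, hr0, (lt_min_iff.1 hrε).1.le, ⟨hw, (lt_min_iff.1 hrε).2⟩,
          corner_mem_closure z hr0⟩)
  have hsub : S \ Gset m Ω t (1 / (n + 1)) ⊆
      (((S \ Gset m Ω t (1 / (n + 1))) \ (⋃ p ∈ u, closure (openCube p.1 p.2))) ∪
      (⋃ p ∈ u, (closure (openCube p.1 p.2) \ openCube p.1 p.2))) := by
    intro z hz
    by_cases h : z ∈ ⋃ p ∈ u, closure (openCube p.1 p.2)
    · simp only [Set.mem_iUnion] at h
      obtain ⟨p, hp, hzp⟩ := h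
      right
      refine Set.mem_biUnion hp ⟨hzp, fun hop => hz.2 ?_⟩
      refine Set.mem_iUnion.2 ⟨p.1, Set.mem_iUnion.2 ⟨p.2, Set.mem_iUnion.2
        ⟨⟨(huprop p hp).2.1, (huprop p hp).2.2⟩, hop⟩⟩⟩
    · exact Or.inl ⟨hz, h⟩
  refine measure_mono_null hsub (measure_union_null hucov ?_)
  refine (measure_biUnion_null_iff hucnt).2 fun p hp => ?_
  exact volume_closure_diff_openCube p.1 (huprop p hp).1

end CubeAux

namespace CubeAux
variable {d : ℕ}

lemma exists_C {m : Set (Fin d → ℝ) → ℝ≥0∞} {Ω : Set (Fin d → ℝ)}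
    (hω : cubeOmega m Ω < ⊤) :
    ∃ δ₀ > (0:ℝ), ∀ y r, 0 < r → r < δ₀ → openCube y r ⊆ Ω →
      m (openCube y r) ≤ (cubeOmega m Ω + 1) * volume (openCube y r) := by
  set C := cubeOmega m Ω + 1 with hCdef
  have hlt : cubeOmega m Ω < C := ENNReal.lt_add_right hω.ne one_ne_zero
  have hev := Filter.eventually_lt_of_limsup_lt hlt (by isBoundedDefault)
  obtain ⟨δ₀, hδ₀prop, hδ₀pos⟩ := (hev.and (eventually_mem_nhdsWithin)).exists
  refine ⟨δ₀, hδ₀pos, fun y r hr hrδ hsub => ?_⟩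
  have hQ : openCube y r ∈ {Q | IsOpenCube Q ∧ Q ⊆ Ω ∧ Metric.diam Q < δ₀} :=
    ⟨isOpenCube_openCube y hr, hsub, lt_of_le_of_lt (diam_openCube_le hr) hrδ⟩
  have hle : m (openCube y r) / volume (openCube y r) < C :=
    lt_of_le_of_lt (le_biSup (f := fun Q => m Q / volume Q) hQ) hδ₀prop
  have hv0 : volume (openCube y r) ≠ 0 := by
    rw [volume_openCube y hr.le]
    simp [ENNReal.ofReal_eq_zero, not_le, pow_pos hr]
  have hvt : volume (openCube y r) ≠ ⊤ := by
    rw [volume_openCube y hr.le]; exact ENNReal.ofReal_ne_top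
  exact le_of_lt ((ENNReal.div_lt_iff (Or.inl hv0) (Or.inl hvt)).1 hle)

end CubeAux

namespace CubeAux
variable {d : ℕ}

lemma exists_closedBall_subset {U : Set (Fin d → ℝ)} (hU : IsOpen U) {z : Fin d → ℝ}
    (hz : z ∈ U) : ∃ ρ > (0:ℝ), Metric.closedBall z ρ ⊆ U := by
  obtain ⟨ρ', hρ', hball⟩ := Metric.isOpen_iff.1 hU z hz
  exact ⟨ρ' / 2, by linarith, subset_trans (Metric.closedBall_subset_ball (by linarith)) hball⟩

lemma msharp_le {m : Set (Fin d → ℝ) → ℝ≥0∞} {Ω : Set (Fin d → ℝ)}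
    {t C : ℝ≥0∞} (hCtop : C ≠ ⊤) {δ₀ : ℝ} (hδ₀ : 0 < δ₀)
    (hCprop : ∀ y r, 0 < r → r < δ₀ → openCube y r ⊆ Ω →
      m (openCube y r) ≤ C * volume (openCube y r))
    {x : Fin d → ℝ} {δ : ℝ} (hδ : 0 < δ) (hEΩ : openCube x δ ⊆ Ω) (htt : t ≠ ⊤) :
    msharp m (openCube x δ) ≤
      t * ENNReal.ofReal (δ ^ d) + C * volume (openCube x δ \ Astar m Ω t) := by
  set A := Astar m Ω t with hAdef
  set E := openCube x δ with hEdef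
  have hEopen : IsOpen E := isOpen_openCube x δ
  have hvolE : volume E = ENNReal.ofReal (δ ^ d) := volume_openCube x hδ.le
  have hvolEtop : volume E ≠ ⊤ := by rw [hvolE]; exact ENNReal.ofReal_ne_top
  rw [msharp]
  refine iSup_le fun δ' => iSup_le fun hδ' => ?_
  refine ENNReal.le_of_forall_pos_le_add fun ε hε hfin => ?_
  set ε₁ : ℝ≥0∞ := (ε : ℝ≥0∞) / C with hε₁def
  -- Stage 1 : Vitali covering of A ∩ E by witness cubes
  obtain ⟨u1, h1cnt, h1prop, h1disj, h1cov⟩ := vitali_cubes (A ∩ E)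
    (fun y r => Witness m Ω t y r ∧ r < min δ' δ₀ ∧ closure (openCube y r) ⊆ E)
    (by
      intro z hz ε' hε'
      obtain ⟨ρ, hρ, hball⟩ := exists_closedBall_subset hEopen hz.2
      obtain ⟨n, hn⟩ := exists_nat_one_div_lt
        (show (0:ℝ) < min ε' (min ρ (min δ' δ₀)) by
          simp [lt_min_iff, hε', hρ, hδ', hδ₀])
      have hzG := Set.mem_iInter.1 hz.1 n
      simp only [Gset, Set.mem_iUnion] at hzG
      obtain ⟨y, r, ⟨hw, hrσ⟩, hzin⟩ := hzG
      have hr0 : 0 < r := hw.1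
      have hrlt := lt_trans hrσ hn
      simp only [lt_min_iff] at hrlt
      have hcl : closure (openCube y r) ⊆ E :=
        subset_trans (openCube_subset_closedBall hr0 (subset_closure hzin))
          (subset_trans (Metric.closedBall_subset_closedBall hrlt.2.1.le) hball)
      exact ⟨y, r, hr0, hrlt.1.le, ⟨hw, lt_min hrlt.2.2.1 hrlt.2.2.2, hcl⟩,
        subset_closure hzin⟩)
  have h1measEq : volume (⋃ p ∈ u1, closure (openCube p.1 p.2))
      = ∑' p : u1, volume (closure (openCube (p:(Fin d → ℝ) × ℝ).1 p.1.2)) :=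
    measure_biUnion h1cnt h1disj fun p _ => isClosed_closure.measurableSet
  have h1sumfin : ∑' p : u1, volume (closure (openCube (p:(Fin d → ℝ) × ℝ).1 p.1.2)) ≠ ⊤ := by
    rw [← h1measEq]
    exact ne_top_of_le_ne_top hvolEtop
      (measure_mono (Set.iUnion₂_subset fun p hp => (h1prop p hp).2.2.2))
  have hε₁pos : 0 < ε₁ := by
    rw [hε₁def]
    exact ENNReal.div_pos (by exact_mod_cast hε.ne') hCtop
  haveI : Countable ↥u1 := h1cnt.to_subtype
  obtain ⟨F, hF⟩ := ((ENNReal.tendsto_tsum_compl_atTop_zero h1sumfin).eventually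
    (Iio_mem_nhds hε₁pos)).exists
  set vset : Set ((Fin d → ℝ) × ℝ) := Subtype.val '' (F : Set ↥u1) with hvdef
  have hvsub : vset ⊆ u1 := by rintro p ⟨q, _, rfl⟩; exact q.2
  have hvfin : vset.Finite := (F.finite_toSet).image _
  set R := E \ ⋃ p ∈ vset, closure (openCube p.1 p.2) with hRdef
  have hRopen : IsOpen R :=
    hEopen.sdiff (hvfin.isClosed_biUnion fun _ _ => isClosed_closure)
  have hRE : R ⊆ E := Set.diff_subset
  -- the measure of R is at most ε₁ + volume (E \ A)
  have hRA : volume (R ∩ A) ≤ ε₁ := by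
    have hsub : R ∩ A ⊆ ((A ∩ E) \ ⋃ p ∈ u1, closure (openCube p.1 p.2)) ∪
        (⋃ q : {q : ↥u1 // q ∉ F}, closure (openCube (q:(Fin d → ℝ) × ℝ).1 q.1.1.2)) := by
      rintro z ⟨hzR, hzA⟩
      by_cases h : z ∈ ⋃ p ∈ u1, closure (openCube p.1 p.2)
      · simp only [Set.mem_iUnion] at h
        obtain ⟨p, hp, hzp⟩ := h
        right
        have hqF : (⟨p, hp⟩ : ↥u1) ∉ F := fun hmem =>
          hzR.2 (Set.mem_biUnion (Set.mem_image_of_mem _ (Finset.mem_coe.2 hmem)) hzp)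
        exact Set.mem_iUnion.2 ⟨⟨⟨p, hp⟩, hqF⟩, hzp⟩
      · exact Or.inl ⟨⟨hzA, hRE hzR⟩, h⟩
    refine le_trans (measure_mono hsub) (le_trans (measure_union_le _ _) ?_)
    rw [h1cov, zero_add]
    exact le_trans (measure_iUnion_le _) hF.le
  have hRvol : volume R ≤ ε₁ + volume (E \ A) := by
    have := measure_inter_add_diff (μ := volume) R (measurableSet_Astar m Ω t)
    calc volume R = volume (R ∩ A) + volume (R \ A) := this.symm
      _ ≤ ε₁ + volume (E \ A) :=
          add_le_add hRA (measure_mono (Set.diff_subset_diff_left hRE))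
  -- Stage 2 : Vitali covering of R by arbitrary small cubes
  obtain ⟨u2, h2cnt, h2prop, h2disj, h2cov⟩ := vitali_cubes R
    (fun y r => closure (openCube y r) ⊆ R ∧ r < min δ' δ₀)
    (by
      intro z hz ε' hε'
      obtain ⟨ρ, hρ, hball⟩ := exists_closedBall_subset hRopen hz
      set r := min ε' (min ρ ((min δ' δ₀)/2)) with hrdef
      have hr0 : 0 < r := by
        simp only [hrdef, lt_min_iff]
        refine ⟨hε', hρ, by simp [lt_min_iff] at *; constructor <;> linarith⟩
      have hrδ : r < min δ' δ₀ := by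
        have h2 : r ≤ (min δ' δ₀)/2 := le_trans (min_le_right _ _) (min_le_right _ _)
        have : 0 < min δ' δ₀ := lt_min hδ' hδ₀
        linarith
      set y : Fin d → ℝ := fun i => z i - r/2 with hydef
      have hzin : z ∈ openCube y r := by
        intro i
        simp only [hydef, Set.mem_Ioo]
        constructor <;> [linarith [hr0]; linarith [hr0]]
      have hcl : closure (openCube y r) ⊆ R :=
        subset_trans (openCube_subset_closedBall hr0 (subset_closure hzin))
          (subset_trans (Metric.closedBall_subset_closedBall
            (le_trans (min_le_right _ _) (min_le_left _ _))) hball)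
      exact ⟨y, r, hr0, min_le_left _ _, ⟨hcl, hrδ⟩, subset_closure hzin⟩)
  have h2measEq : volume (⋃ p ∈ u2, closure (openCube p.1 p.2))
      = ∑' p : u2, volume (closure (openCube (p:(Fin d → ℝ) × ℝ).1 p.1.2)) :=
    measure_biUnion h2cnt h2disj fun p _ => isClosed_closure.measurableSet
  have h2sumle : ∑' p : u2, volume (closure (openCube (p:(Fin d → ℝ) × ℝ).1 p.1.2))
      ≤ volume R := by
    rw [← h2measEq]
    exact measure_mono (Set.iUnion₂_subset fun p hp => (h2prop p hp).2.1)
  -- the family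
  set cub : (Fin d → ℝ) × ℝ → Set (Fin d → ℝ) := fun p => openCube p.1 p.2 with hcubdef
  set 𝒬 : Set (Set (Fin d → ℝ)) := cub '' vset ∪ cub '' u2 with h𝒬def
  have hfam : CubeFam E δ' 𝒬 := by
    refine ⟨(hvfin.countable.image _).union (h2cnt.image _), ?_, ?_, ?_⟩
    · rintro Q (⟨p, hp, rfl⟩ | ⟨p, hp, rfl⟩)
      · obtain ⟨hr0, _, hrlt, hclE⟩ := h1prop p (hvsub hp)
        refine ⟨isOpenCube_openCube p.1 hr0,
          lt_of_le_of_lt (diam_openCube_le hr0) (lt_of_lt_of_le hrlt (min_le_left _ _)), ?_⟩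
        obtain ⟨w, hw⟩ := nonempty_openCube p.1 hr0
        exact ⟨w, hw, hclE (subset_closure hw)⟩
      · obtain ⟨hr0, hclR, hrlt⟩ := h2prop p hp
        refine ⟨isOpenCube_openCube p.1 hr0,
          lt_of_le_of_lt (diam_openCube_le hr0) (lt_of_lt_of_le hrlt (min_le_left _ _)), ?_⟩
        obtain ⟨w, hw⟩ := nonempty_openCube p.1 hr0
        exact ⟨w, hw, hRE (hclR (subset_closure hw))⟩
    · rintro Q (⟨p, hp, rfl⟩ | ⟨p, hp, rfl⟩) Q' (⟨p', hp', rfl⟩ | ⟨p', hp', rfl⟩) hne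
      · refine h1disj (hvsub hp) (hvsub hp') fun he => hne (by rw [he])
      · refine Set.disjoint_left.2 fun a ha ha' => ?_
        exact ((h2prop p' hp').2.1 ha').2 (Set.mem_biUnion hp ha)
      · refine Set.disjoint_right.2 fun a ha ha' => ?_
        exact ((h2prop p hp).2.1 ha').2 (Set.mem_biUnion hp' ha)
      · refine h2disj hp hp' fun he => hne (by rw [he])
    · have hsub : E \ ⋃₀ 𝒬 ⊆
          ((R \ (⋃ p ∈ u2, closure (cub p))) ∪
            (⋃ p ∈ vset, (closure (cub p) \ cub p)) ∪
            (⋃ p ∈ u2, (closure (cub p) \ cub p))) := by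
        intro z hz
        have hznot : ∀ p ∈ vset, z ∉ cub p := fun p hp hzp =>
          hz.2 ⟨cub p, Or.inl (Set.mem_image_of_mem _ hp), hzp⟩
        have hznot2 : ∀ p ∈ u2, z ∉ cub p := fun p hp hzp =>
          hz.2 ⟨cub p, Or.inr (Set.mem_image_of_mem _ hp), hzp⟩
        by_cases h1 : z ∈ ⋃ p ∈ vset, closure (cub p)
        · obtain ⟨p, hp, hzp⟩ := by simpa only [Set.mem_iUnion] using h1
          exact Or.inl (Or.inr (Set.mem_biUnion hp ⟨hzp, hznot p hp⟩))
        · by_cases h2 : z ∈ ⋃ p ∈ u2, closure (cub p)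
          · obtain ⟨p, hp, hzp⟩ := by simpa only [Set.mem_iUnion] using h2
            exact Or.inr (Set.mem_biUnion hp ⟨hzp, hznot2 p hp⟩)
          · exact Or.inl (Or.inl ⟨⟨hz.1, h1⟩, h2⟩)
      refine measure_mono_null hsub ?_
      refine measure_union_null (measure_union_null h2cov ?_) ?_
      · exact (measure_biUnion_null_iff hvfin.countable).2 fun p hp =>
          volume_closure_diff_openCube p.1 (h1prop p (hvsub hp)).1
      · exact (measure_biUnion_null_iff h2cnt).2 fun p hp =>
          volume_closure_diff_openCube p.1 (h2prop p hp).1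
  -- the sum over the family
  have hsum : ∑' Q : 𝒬, m Q ≤ t * volume E + C * volume R := by
    refine le_trans (ENNReal.tsum_union_le m _ _) ?_
    have hs1 : ∑' Q : (cub '' vset), m Q ≤ t * volume E := by
      have hsurj : Function.Surjective
          (fun p : ↥vset => (⟨cub p, Set.mem_image_of_mem _ p.2⟩ : ↥(cub '' vset))) := by
        rintro ⟨Q, p, hp, rfl⟩
        exact ⟨⟨p, hp⟩, rfl⟩
      refine le_trans (ENNReal.tsum_le_tsum_comp_of_surjective hsurj fun Q => m Q) ?_
      have hle : ∀ p : ↥vset, m (cub p) ≤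
          t * volume (closure (openCube (p:(Fin d → ℝ) × ℝ).1 p.1.2)) := by
        intro p
        rw [volume_closure_openCube _ (h1prop p (hvsub p.2)).1,
          ← volume_openCube _ (h1prop p (hvsub p.2)).1.le]
        exact (h1prop p (hvsub p.2)).2.1.2.2
      refine le_trans (ENNReal.tsum_le_tsum hle) ?_
      rw [ENNReal.tsum_mul_left]
      gcongr
      rw [← measure_biUnion hvfin.countable (h1disj.subset hvsub)
        (fun p _ => isClosed_closure.measurableSet)]
      exact measure_mono (Set.iUnion₂_subset fun p hp => (h1prop p (hvsub hp)).2.2.2)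
    have hs2 : ∑' Q : (cub '' u2), m Q ≤ C * volume R := by
      have hsurj : Function.Surjective
          (fun p : ↥u2 => (⟨cub p, Set.mem_image_of_mem _ p.2⟩ : ↥(cub '' u2))) := by
        rintro ⟨Q, p, hp, rfl⟩
        exact ⟨⟨p, hp⟩, rfl⟩
      refine le_trans (ENNReal.tsum_le_tsum_comp_of_surjective hsurj fun Q => m Q) ?_
      have hle : ∀ p : ↥u2, m (cub p) ≤
          C * volume (closure (openCube (p:(Fin d → ℝ) × ℝ).1 p.1.2)) := by
        intro p
        rw [volume_closure_openCube _ (h2prop p p.2).1,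
          ← volume_openCube _ (h2prop p p.2).1.le]
        refine hCprop p.1.1 p.1.2 (h2prop p p.2).1
          (lt_of_lt_of_le (h2prop p p.2).2.2 (min_le_right _ _)) ?_
        exact subset_trans (subset_trans subset_closure (h2prop p p.2).2.1)
          (subset_trans hRE hEΩ)
      refine le_trans (ENNReal.tsum_le_tsum hle) ?_
      rw [ENNReal.tsum_mul_left]
      gcongr
    exact add_le_add hs1 hs2
  refine le_trans (iInf_le_of_le 𝒬 (iInf_le _ hfam)) ?_
  refine le_trans hsum ?_
  calc t * volume E + C * volume R ≤
      t * ENNReal.ofReal (δ ^ d) + C * (ε₁ + volume (E \ A)) := by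
        rw [hvolE]; gcongr
    _ = t * ENNReal.ofReal (δ ^ d) + C * volume (E \ A) + C * ε₁ := by ring
    _ ≤ t * ENNReal.ofReal (δ ^ d) + C * volume (E \ A) + ε := by
        gcongr
        exact ENNReal.mul_div_le

end CubeAux

namespace CubeAux
variable {d : ℕ}

lemma ae_density (m : Set (Fin d → ℝ) → ℝ≥0∞) (Ω : Set (Fin d → ℝ)) (t : ℝ≥0∞) :
    ∀ᵐ x ∂(volume : Measure (Fin d → ℝ)), x ∈ Astar m Ω t →
      Filter.Tendsto (fun δ : ℝ =>
          volume (openCube x δ \ Astar m Ω t) / ENNReal.ofReal (δ ^ d))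
        (nhdsWithin 0 (Set.Ioi 0)) (nhds 0) := by
  set A := Astar m Ω t with hAdef
  filter_upwards [Besicovitch.ae_tendsto_measure_inter_div_of_measurableSet
    (volume : Measure (Fin d → ℝ)) (measurableSet_Astar m Ω t)] with x hx hxA
  rw [Set.indicator_of_mem hxA] at hx
  have hcb : ∀ δ : ℝ, 0 < δ →
      volume (Metric.closedBall x δ) = (2:ℝ≥0∞) ^ d * ENNReal.ofReal (δ ^ d) := by
    intro δ hδ
    rw [Real.volume_pi_closedBall x hδ.le, Fintype.card_fin, mul_pow,
      ENNReal.ofReal_mul (by positivity), ENNReal.ofReal_pow (by norm_num)]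
    norm_num
  have hofReal0 : ∀ δ : ℝ, 0 < δ → ENNReal.ofReal (δ ^ d) ≠ 0 := by
    intro δ hδ
    simp [ENNReal.ofReal_eq_zero, not_le, pow_pos hδ]
  have hcb0 : ∀ δ : ℝ, 0 < δ → volume (Metric.closedBall x δ) ≠ 0 := by
    intro δ hδ
    rw [hcb δ hδ]
    exact mul_ne_zero (by positivity) (hofReal0 δ hδ)
  have hcbtop : ∀ δ : ℝ, 0 < δ → volume (Metric.closedBall x δ) ≠ ⊤ := by
    intro δ hδ
    rw [hcb δ hδ]
    exact ENNReal.mul_ne_top (by simp) ENNReal.ofReal_ne_top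
  have hg : Filter.Tendsto (fun δ : ℝ =>
      volume (Metric.closedBall x δ \ A) / volume (Metric.closedBall x δ))
      (nhdsWithin 0 (Set.Ioi 0)) (nhds 0) := by
    have hsub : Filter.Tendsto (fun δ : ℝ =>
        (1:ℝ≥0∞) - volume (A ∩ Metric.closedBall x δ) / volume (Metric.closedBall x δ))
        (nhdsWithin 0 (Set.Ioi 0)) (nhds 0) := by
      have := ENNReal.Tendsto.sub (tendsto_const_nhds (x := (1:ℝ≥0∞))) hx
        (Or.inl (by simp))
      simpa using this
    refine hsub.congr' ?_
    filter_upwards [eventually_mem_nhdsWithin] with δ (hδ : 0 < δ)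
    have h1 : volume (A ∩ Metric.closedBall x δ) / volume (Metric.closedBall x δ) +
        volume (Metric.closedBall x δ \ A) / volume (Metric.closedBall x δ) = 1 := by
      rw [ENNReal.div_add_div_same]
      rw [show volume (A ∩ Metric.closedBall x δ) + volume (Metric.closedBall x δ \ A) =
        volume (Metric.closedBall x δ) by
          rw [Set.inter_comm]
          exact measure_inter_add_diff _ (measurableSet_Astar m Ω t)]
      exact ENNReal.div_self (hcb0 δ hδ) (hcbtop δ hδ)
    refine ENNReal.sub_eq_of_eq_add ?_ ?_
    · refine ne_top_of_le_ne_top (@ENNReal.one_ne_top) ?_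
      refine ENNReal.div_le_of_le_mul ?_
      rw [one_mul]
      exact measure_mono Set.inter_subset_right
    · rw [← h1, add_comm]
  -- squeeze
  have hub : ∀ᶠ δ : ℝ in nhdsWithin 0 (Set.Ioi 0),
      volume (openCube x δ \ A) / ENNReal.ofReal (δ ^ d) ≤
        (2:ℝ≥0∞) ^ d * (volume (Metric.closedBall x δ \ A) / volume (Metric.closedBall x δ)) := by
    filter_upwards [eventually_mem_nhdsWithin] with δ (hδ : 0 < δ)
    have hsubset : openCube x δ \ A ⊆ Metric.closedBall x δ \ A :=
      Set.diff_subset_diff_left (subset_trans subset_closure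
        (openCube_subset_closedBall hδ (corner_mem_closure x hδ)))
    have h2d0 : ((2:ℝ≥0∞) ^ d) ≠ 0 := pow_ne_zero _ (by norm_num)
    have h2dtop : ((2:ℝ≥0∞) ^ d) ≠ ⊤ := ENNReal.pow_ne_top (by norm_num)
    calc volume (openCube x δ \ A) / ENNReal.ofReal (δ ^ d)
        ≤ volume (Metric.closedBall x δ \ A) / ENNReal.ofReal (δ ^ d) :=
          ENNReal.div_le_div_right (measure_mono hsubset) _
      _ = (2:ℝ≥0∞) ^ d * volume (Metric.closedBall x δ \ A) /
            ((2:ℝ≥0∞) ^ d * ENNReal.ofReal (δ ^ d)) :=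
          (ENNReal.mul_div_mul_left _ _ h2d0 h2dtop).symm
      _ = _ := by rw [hcb δ hδ, mul_div_assoc]
  have hlim2 : Filter.Tendsto (fun δ : ℝ => (2:ℝ≥0∞) ^ d *
      (volume (Metric.closedBall x δ \ A) / volume (Metric.closedBall x δ)))
      (nhdsWithin 0 (Set.Ioi 0)) (nhds 0) := by
    have := ENNReal.Tendsto.const_mul (a := (2:ℝ≥0∞) ^ d) hg
      (Or.inr (ENNReal.pow_ne_top (by norm_num)))
    simpa using this
  exact tendsto_of_tendsto_of_tendsto_of_le_of_le' tendsto_const_nhds hlim2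
    (Filter.Eventually.of_forall fun δ => zero_le) hub

end CubeAux

/-- (Proposition 7.1.) If `ω < ∞` and, for a.e. `x ∈ Ω`,
`limsup_{δ→0} m(Q_δ(x))/δ^d ≤ limsup_{δ→0} m^♯(Q_δ(x))/δ^d`, then for a.e. `x ∈ Ω` the
limit `lim_{δ→0} m(Q_δ(x))/δ^d` exists, i.e. limsup = liminf. -/
theorem stmt19 {d : ℕ} (Ω : Set (Fin d → ℝ))
    (hΩopen : IsOpen Ω) (hΩbd : Bornology.IsBounded Ω)
    (m : Set (Fin d → ℝ) → ENNReal) (hm0 : m ∅ = 0)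
    (hω : cubeOmega m Ω < ⊤)
    (hae : ∀ᵐ x ∂(volume.restrict Ω),
      Filter.limsup (fun δ : ℝ => m (openCube x δ) / ENNReal.ofReal (δ ^ d))
          (nhdsWithin 0 (Set.Ioi 0)) ≤
        Filter.limsup (fun δ : ℝ => msharp m (openCube x δ) / ENNReal.ofReal (δ ^ d))
          (nhdsWithin 0 (Set.Ioi 0))) :
    ∀ᵐ x ∂(volume.restrict Ω),
      Filter.limsup (fun δ : ℝ => m (openCube x δ) / ENNReal.ofReal (δ ^ d))
          (nhdsWithin 0 (Set.Ioi 0)) =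
        Filter.liminf (fun δ : ℝ => m (openCube x δ) / ENNReal.ofReal (δ ^ d))
          (nhdsWithin 0 (Set.Ioi 0)) := by
  classical
  obtain ⟨δ₀, hδ₀, hCprop⟩ := CubeAux.exists_C hω
  set C := cubeOmega m Ω + 1 with hCdef
  have hCtop : C ≠ ⊤ := ENNReal.add_ne_top.2 ⟨hω.ne, ENNReal.one_ne_top⟩
  have hC0 : C ≠ 0 := by simp [hCdef]
  -- notation
  set L : (Fin d → ℝ) → ℝ≥0∞ := fun x =>
    Filter.liminf (fun δ : ℝ => m (openCube x δ) / ENNReal.ofReal (δ ^ d))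
      (nhdsWithin 0 (Set.Ioi 0)) with hLdef
  set M : (Fin d → ℝ) → ℝ≥0∞ := fun x =>
    Filter.limsup (fun δ : ℝ => msharp m (openCube x δ) / ENNReal.ofReal (δ ^ d))
      (nhdsWithin 0 (Set.Ioi 0)) with hMdef
  have hkey : ∀ q : ℚ, ∀ᵐ x ∂(volume.restrict Ω),
      (L x < ENNReal.ofReal (q:ℝ) → M x ≤ ENNReal.ofReal (q:ℝ)) := by
    intro q
    set t := ENNReal.ofReal (q:ℝ) with htdef
    have htt : t ≠ ⊤ := ENNReal.ofReal_ne_top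
    have hnull : volume ({x ∈ Ω | L x < t} \ CubeAux.Astar m Ω t) = 0 :=
      CubeAux.ae_mem_Astar hΩopen t
    have h1 : ∀ᵐ x ∂(volume.restrict Ω), x ∉ ({x ∈ Ω | L x < t} \ CubeAux.Astar m Ω t) :=
      ae_mono Measure.restrict_le_self (measure_eq_zero_iff_ae_notMem.1 hnull)
    have h2 : ∀ᵐ x ∂(volume.restrict Ω), x ∈ CubeAux.Astar m Ω t →
        Filter.Tendsto (fun δ : ℝ =>
          volume (openCube x δ \ CubeAux.Astar m Ω t) / ENNReal.ofReal (δ ^ d))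
          (nhdsWithin 0 (Set.Ioi 0)) (nhds 0) :=
      ae_mono Measure.restrict_le_self (CubeAux.ae_density m Ω t)
    filter_upwards [h1, h2, ae_restrict_mem hΩopen.measurableSet] with x hx1 hx2 hx3 hL
    have hxA : x ∈ CubeAux.Astar m Ω t := by
      by_contra hA
      exact hx1 ⟨⟨hx3, hL⟩, hA⟩
    have hTend := hx2 hxA
    -- Show M x ≤ t
    refine ENNReal.le_of_forall_pos_le_add fun ε hε _ => ?_
    have hεC : (0:ℝ≥0∞) < (ε:ℝ≥0∞) / C := ENNReal.div_pos (by exact_mod_cast hε.ne') hCtop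
    obtain ⟨ρ, hρ, hball⟩ := CubeAux.exists_closedBall_subset hΩopen hx3
    have hev1 : ∀ᶠ δ : ℝ in nhdsWithin 0 (Set.Ioi 0), openCube x δ ⊆ Ω := by
      filter_upwards [Ioo_mem_nhdsGT_of_mem ⟨le_refl (0:ℝ), hρ⟩] with δ hδ
      exact subset_trans (subset_trans subset_closure
        (CubeAux.openCube_subset_closedBall hδ.1 (CubeAux.corner_mem_closure x hδ.1)))
        (subset_trans (Metric.closedBall_subset_closedBall hδ.2.le) hball)
    have hev2 : ∀ᶠ δ : ℝ in nhdsWithin 0 (Set.Ioi 0),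
        volume (openCube x δ \ CubeAux.Astar m Ω t) / ENNReal.ofReal (δ ^ d) <
          (ε:ℝ≥0∞) / C :=
      hTend.eventually (Iio_mem_nhds hεC)
    refine Filter.limsup_le_of_le (by isBoundedDefault) ?_
    filter_upwards [hev1, hev2, eventually_mem_nhdsWithin] with δ hδΩ hδε (hδ : 0 < δ)
    have hv0 : ENNReal.ofReal (δ ^ d) ≠ 0 := by
      simp [ENNReal.ofReal_eq_zero, not_le, pow_pos hδ]
    have hvt : ENNReal.ofReal (δ ^ d) ≠ ⊤ := ENNReal.ofReal_ne_top
    have hms := CubeAux.msharp_le (m := m) (Ω := Ω) (t := t) (C := C) hCtop hδ₀ hCprop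
      hδ hδΩ htt
    calc msharp m (openCube x δ) / ENNReal.ofReal (δ ^ d)
        ≤ (t * ENNReal.ofReal (δ ^ d) +
            C * volume (openCube x δ \ CubeAux.Astar m Ω t)) / ENNReal.ofReal (δ ^ d) :=
          ENNReal.div_le_div_right hms _
      _ = t * ENNReal.ofReal (δ ^ d) / ENNReal.ofReal (δ ^ d) +
            C * volume (openCube x δ \ CubeAux.Astar m Ω t) / ENNReal.ofReal (δ ^ d) :=
          ENNReal.add_div
      _ ≤ t + ε := by
          gcongr
          · rw [mul_div_assoc, ENNReal.div_self hv0 hvt, mul_one]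
          · rw [mul_div_assoc]
            refine le_trans (mul_le_mul_right hδε.le C) ?_
            exact ENNReal.mul_div_le
  have hall : ∀ᵐ x ∂(volume.restrict Ω), ∀ q : ℚ,
      (L x < ENNReal.ofReal (q:ℝ) → M x ≤ ENNReal.ofReal (q:ℝ)) :=
    (MeasureTheory.ae_all_iff).2 hkey
  filter_upwards [hae, hall] with x hx hq
  refine le_antisymm ?_ ?_
  · refine le_trans hx ?_
    -- M x ≤ L x
    by_contra hcon
    push_neg at hcon
    obtain ⟨q, hq0, h1, h2⟩ := ENNReal.lt_iff_exists_rat_btwn.1 hcon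
    have h3 : M x ≤ ENNReal.ofReal (q:ℝ) := hq q h1
    exact absurd (lt_of_le_of_lt h3 h2) (lt_irrefl _)
  · exact Filter.liminf_le_limsup (by isBoundedDefault) (by isBoundedDefault)
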